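/- For every i ∈ {1, …, L}, w^{(i)} ≥ d, where d is the code distance of the polynomial remainder code with moduli m_1(x), …, m_L(x) and w^{(i)} is the code distance of the polynomial remainder code with the L−1 moduli Γ_{ji}(x) = m_j(x)/gcd(m_i(x), m_j(x)), j ≠ i. -/

import Mathlib

open Polynomial
open scoped Classical

/-- The code distance of the polynomial remainder code with moduli `m i`, `i ∈ s`. -/
noncomputable def codeDist {F : Type*} [Field F] {ι : Type*} (s : Finset ι)
    (m : ι → Polynomial F) : ℕ :=
  sInf {k | ∃ a : Polynomial F, a ≠ 0 ∧ a.degree < (s.lcm m).degree ∧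
    (s.filter fun i => ¬ m i ∣ a).card = k}

/-- For every `i`, the code distance `w⁽ⁱ⁾` of the polynomial remainder
code with the `L−1` moduli `Γ_{ji} = m_j / gcd(m_i, m_j)`, `j ≠ i`, is at least the
code distance `d` of the code with moduli `m_1, …, m_L`. -/
theorem stmt7 {F : Type*} [Field F] {L : ℕ} (hL : 2 ≤ L)
    (m : Fin L → Polynomial F)
    (hmonic : ∀ i, (m i).Monic)
    (hdist : Function.Injective m)
    (hdeg : ∀ i, 0 < (m i).degree)
    (hm_lt : ∀ i, (m i).degree < (Finset.univ.lcm m).degree) :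
    ∀ i : Fin L,
      codeDist Finset.univ m ≤
        codeDist (Finset.univ.erase i) (fun j => m j /ₘ gcd (m i) (m j)) := by
  intro i
  set M := Finset.univ.lcm m with hMdef
  have hmne : ∀ j, m j ≠ 0 := fun j => (hmonic j).ne_zero
  have hM0 : M ≠ 0 := by
    intro h
    have := hm_lt i
    rw [h, Polynomial.degree_zero] at this
    exact not_lt_bot this
  set Γ : Fin L → Polynomial F := fun j => m j /ₘ gcd (m i) (m j) with hΓdef
  have hg0 : ∀ j, gcd (m i) (m j) ≠ 0 := by
    intro j h
    exact hmne i ((gcd_eq_zero_iff _ _).mp h).1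
  have hgmonic : ∀ j, (gcd (m i) (m j)).Monic := by
    intro j
    have := Polynomial.monic_normalize (hg0 j)
    rwa [normalize_gcd] at this
  have hΓeq : ∀ j, gcd (m i) (m j) * Γ j = m j := by
    intro j
    have h := Polynomial.modByMonic_add_div (m j) (gcd (m i) (m j))
    rwa [(Polynomial.modByMonic_eq_zero_iff_dvd (hgmonic j)).mpr (gcd_dvd_right _ _),
      zero_add] at h
  have hΓmonic : ∀ j, (Γ j).Monic := fun j =>
    (hgmonic j).of_mul_monic_left (by rw [hΓeq j]; exact hmonic j)
  have hΓ0 : ∀ j, Γ j ≠ 0 := fun j => (hΓmonic j).ne_zero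
  -- m i * Γ j = lcm (m i) (m j)
  have hE : ∀ j, m i * Γ j = lcm (m i) (m j) := by
    intro j
    refine Polynomial.eq_of_monic_of_associated ((hmonic i).mul (hΓmonic j)) ?_ ?_
    · have hne : lcm (m i) (m j) ≠ 0 := by
        intro h
        rcases (lcm_eq_zero_iff _ _).mp h with h' | h'
        · exact hmne i h'
        · exact hmne j h'
      have := Polynomial.monic_normalize hne
      rwa [normalize_lcm] at this
    · have h1 : Associated (gcd (m i) (m j) * lcm (m i) (m j)) (m i * m j) :=
        gcd_mul_lcm _ _
      have h2 : m i * m j = gcd (m i) (m j) * (m i * Γ j) := by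
        conv_lhs => rw [← hΓeq j]
        ring
      rw [h2] at h1
      exact (h1.of_mul_left (Associated.refl _) (hg0 j)).symm
  -- each lcm (m i) (m j) divides M
  have hlcmM : ∀ j, lcm (m i) (m j) ∣ M :=
    fun j => lcm_dvd (Finset.dvd_lcm (Finset.mem_univ i)) (Finset.dvd_lcm (Finset.mem_univ j))
  obtain ⟨Q, hQ⟩ : m i ∣ M := Finset.dvd_lcm (Finset.mem_univ i)
  have hΓQ : ∀ j, Γ j ∣ Q := by
    intro j
    have : m i * Γ j ∣ m i * Q := by rw [hE j, ← hQ]; exact hlcmM j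
    exact (mul_dvd_mul_iff_left (hmne i)).mp this
  set N := (Finset.univ.erase i).lcm Γ with hNdef
  have hNQ : N ∣ Q := Finset.lcm_dvd fun j _ => hΓQ j
  have hQ0 : Q ≠ 0 := by
    intro h; rw [h, mul_zero] at hQ; exact hM0 hQ
  have hN0 : N ≠ 0 := ne_zero_of_dvd_ne_zero hQ0 hNQ
  have hNM : m i * N ∣ M := hQ ▸ mul_dvd_mul_left _ hNQ
  -- degree of N is positive
  have hNpos : 0 < N.degree := by
    by_contra h
    push_neg at h
    have hall : ∀ j, j ≠ i → m j ∣ m i := by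
      intro j hj
      have hΓN : Γ j ∣ N := Finset.dvd_lcm (by simp [hj])
      have : (Γ j).degree ≤ 0 :=
        le_trans (Polynomial.degree_le_of_dvd hΓN hN0) h
      have hΓ1 : Γ j = 1 := by
        have hnd : (Γ j).natDegree = 0 :=
          Polynomial.natDegree_eq_zero_iff_degree_le_zero.mpr this
        exact (hΓmonic j).natDegree_eq_zero.mp hnd
      rw [← hΓeq j, hΓ1, mul_one]
      exact gcd_dvd_left _ _
    have hMdvd : M ∣ m i := Finset.lcm_dvd fun j _ => by
      by_cases hj : j = i
      · subst hj; exact dvd_rfl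
      · exact hall j hj
    have := Polynomial.degree_le_of_dvd hMdvd (hmne i)
    exact absurd (hm_lt i) (not_lt.mpr this)
  -- the set defining the RHS codeDist is nonempty
  have hSne : {k | ∃ a : Polynomial F, a ≠ 0 ∧
      a.degree < ((Finset.univ.erase i).lcm Γ).degree ∧
      ((Finset.univ.erase i).filter fun j => ¬ Γ j ∣ a).card = k}.Nonempty := by
    refine ⟨_, 1, one_ne_zero, ?_, rfl⟩
    simpa using hNpos
  have hw := Nat.sInf_mem hSne
  obtain ⟨k, hk0, hkdeg, hkcard⟩ := hw
  -- build a codeword for the big code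
  set a := k * m i with hadef
  have ha0 : a ≠ 0 := mul_ne_zero hk0 (hmne i)
  have hadeg : a.degree < M.degree := by
    have h1 : a.degree = k.degree + (m i).degree := Polynomial.degree_mul
    have h2 : k.degree + (m i).degree < N.degree + (m i).degree :=
      WithBot.add_lt_add_right (Polynomial.degree_ne_bot.mpr (hmne i)) hkdeg
    have h3 : N.degree + (m i).degree ≤ M.degree := by
      have : (m i * N).degree ≤ M.degree :=
        Polynomial.degree_le_of_dvd hNM hM0
      rwa [Polynomial.degree_mul, add_comm] at this
    rw [h1]; exact lt_of_lt_of_le h2 h3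
  have hsub : (Finset.univ.filter fun j => ¬ m j ∣ a) ⊆
      ((Finset.univ.erase i).filter fun j => ¬ Γ j ∣ k) := by
    intro j hj
    rw [Finset.mem_filter] at hj
    obtain ⟨-, hnd⟩ := hj
    have hji : j ≠ i := by
      rintro rfl
      exact hnd (dvd_mul_left _ _)
    rw [Finset.mem_filter, Finset.mem_erase]
    refine ⟨⟨hji, Finset.mem_univ j⟩, fun hΓk => hnd ?_⟩
    have h1 : m j ∣ m i * Γ j := by rw [hE j]; exact dvd_lcm_right _ _
    have h2 : m i * Γ j ∣ m i * k := mul_dvd_mul_left _ hΓk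
    calc m j ∣ m i * k := dvd_trans h1 h2
      _ = a := mul_comm _ _
  calc codeDist Finset.univ m ≤ (Finset.univ.filter fun j => ¬ m j ∣ a).card :=
        Nat.sInf_le ⟨a, ha0, hadeg, rfl⟩
    _ ≤ ((Finset.univ.erase i).filter fun j => ¬ Γ j ∣ k).card := Finset.card_le_card hsub
    _ = _ := hkcard
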